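/- Let L be a J-Hermitian block matrix (L₁₁* = L₁₁, L₂₂* = L₂₂, L₁₂* = −L₂₁) with L₁₁ ≥ 0 and L₂₂ ≥ 0 (positive semidefinite). Then every principal minor det L_ξ of L is real and nonnegative. -/

import Mathlib

open Matrix
open scoped ComplexOrder

lemma psd_det_real {n : Type*} [Fintype n] [DecidableEq n] {A : Matrix n n ℂ}
    (hA : A.PosSemidef) : ∃ r : ℝ, 0 ≤ r ∧ A.det = (r : ℂ) := by
  refine ⟨∏ i, hA.isHermitian.eigenvalues i, Finset.prod_nonneg fun i _ => hA.eigenvalues_nonneg i, ?_⟩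
  rw [hA.isHermitian.det_eq_prod_eigenvalues]
  push_cast
  rfl

lemma key_posdef {n₁ n₂ : Type*} [Fintype n₁] [DecidableEq n₁] [Fintype n₂] [DecidableEq n₂]
    (A : Matrix n₁ n₁ ℂ) (B : Matrix n₁ n₂ ℂ) (C : Matrix n₂ n₁ ℂ) (D : Matrix n₂ n₂ ℂ)
    (hA : A.PosDef) (hD : D.PosSemidef) (hBC : Bᴴ = -C) :
    ∃ r : ℝ, 0 ≤ r ∧ (fromBlocks A B C D).det = (r : ℂ) := by
  haveI := hA.isUnit.invertible
  rw [det_fromBlocks₁₁]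
  have hC : C = -Bᴴ := by rw [hBC, neg_neg]
  have hschur : D - C * ⅟A * B = D + Bᴴ * A⁻¹ * B := by
    rw [hC, invOf_eq_nonsing_inv]
    simp [neg_mul, sub_neg_eq_add]
  rw [hschur]
  have h1 : (D + Bᴴ * A⁻¹ * B).PosSemidef :=
    hD.add (hA.inv.posSemidef.conjTranspose_mul_mul_same B)
  obtain ⟨r, hr, hrd⟩ := psd_det_real hA.posSemidef
  obtain ⟨s, hs, hsd⟩ := psd_det_real h1
  exact ⟨r * s, mul_nonneg hr hs, by rw [hrd, hsd]; push_cast; ring⟩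

lemma key {n₁ n₂ : Type*} [Fintype n₁] [DecidableEq n₁] [Fintype n₂] [DecidableEq n₂]
    (A : Matrix n₁ n₁ ℂ) (B : Matrix n₁ n₂ ℂ) (C : Matrix n₂ n₁ ℂ) (D : Matrix n₂ n₂ ℂ)
    (hA : A.PosSemidef) (hD : D.PosSemidef) (hBC : Bᴴ = -C) :
    (fromBlocks A B C D).det.im = 0 ∧ 0 ≤ (fromBlocks A B C D).det.re := by
  set S : Set ℂ := {z : ℂ | z.im = 0 ∧ 0 ≤ z.re} with hS
  have hSclosed : IsClosed S :=
    (isClosed_eq Complex.continuous_im continuous_const).inter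
      (isClosed_le continuous_const Complex.continuous_re)
  set f : ℝ → ℂ := fun ε => (fromBlocks (A + (ε : ℂ) • 1) B C D).det with hf
  have hcont : Continuous f := by
    apply Continuous.matrix_det
    apply Continuous.matrix_fromBlocks
    · exact continuous_const.add ((Complex.continuous_ofReal.smul continuous_const))
    all_goals exact continuous_const
  have hmem : ∀ ε : ℝ, 0 < ε → f ε ∈ S := by
    intro ε hε
    have hPD : ((ε : ℂ) • (1 : Matrix n₁ n₁ ℂ)).PosDef := by
      rw [smul_one_eq_diagonal]
      refine posDef_diagonal_iff.mpr fun i => by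
        simpa using (Complex.zero_lt_real.mpr hε)
    obtain ⟨r, hr, hrd⟩ := key_posdef (A + (ε : ℂ) • 1) B C D
      (Matrix.PosDef.posSemidef_add hA hPD) hD hBC
    have hfe : f ε = (r : ℂ) := hrd
    exact ⟨by rw [hfe]; simp, by rw [hfe]; simpa using hr⟩
  have htend : Filter.Tendsto f (nhdsWithin 0 (Set.Ioi 0)) (nhds (f 0)) :=
    (hcont.tendsto 0).mono_left nhdsWithin_le_nhds
  have h0 : f 0 ∈ S := by
    refine hSclosed.mem_of_tendsto htend ?_
    filter_upwards [self_mem_nhdsWithin] with ε hε using hmem ε hε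
  simpa [hf, hS] using h0

theorem stmt_4 {X₁ X₂ : Type*} [Fintype X₁] [DecidableEq X₁] [Fintype X₂] [DecidableEq X₂]
    (L : Matrix (X₁ ⊕ X₂) (X₁ ⊕ X₂) ℂ)
    (h11 : L.toBlocks₁₁.PosSemidef) (h22 : L.toBlocks₂₂.PosSemidef)
    (h12 : L.toBlocks₁₂ᴴ = -L.toBlocks₂₁) :
    ∀ ξ : Finset (X₁ ⊕ X₂),
      ((L.submatrix (fun i : {x // x ∈ ξ} => (i : X₁ ⊕ X₂))
          (fun j : {x // x ∈ ξ} => (j : X₁ ⊕ X₂))).det).im = 0 ∧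
        0 ≤ ((L.submatrix (fun i : {x // x ∈ ξ} => (i : X₁ ⊕ X₂))
          (fun j : {x // x ∈ ξ} => (j : X₁ ⊕ X₂))).det).re := by
  intro ξ
  set c₁ : {a : X₁ // Sum.inl a ∈ ξ} → X₁ := Subtype.val
  set c₂ : {b : X₂ // Sum.inr b ∈ ξ} → X₂ := Subtype.val
  set N := fromBlocks (L.toBlocks₁₁.submatrix c₁ c₁) (L.toBlocks₁₂.submatrix c₁ c₂)
    (L.toBlocks₂₁.submatrix c₂ c₁) (L.toBlocks₂₂.submatrix c₂ c₂) with hN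
  let e : {x // x ∈ ξ} ≃ {a : X₁ // Sum.inl a ∈ ξ} ⊕ {b : X₂ // Sum.inr b ∈ ξ} :=
    Equiv.subtypeSum
  have hsub : L.submatrix (fun i : {x // x ∈ ξ} => (i : X₁ ⊕ X₂))
      (fun j : {x // x ∈ ξ} => (j : X₁ ⊕ X₂)) = N.submatrix e e := by
    ext ⟨i, hi⟩ ⟨j, hj⟩
    cases i <;> cases j <;> rfl
  have hkey := key (L.toBlocks₁₁.submatrix c₁ c₁) (L.toBlocks₁₂.submatrix c₁ c₂)
    (L.toBlocks₂₁.submatrix c₂ c₁) (L.toBlocks₂₂.submatrix c₂ c₂)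
    (h11.submatrix c₁) (h22.submatrix c₂)
    (by rw [conjTranspose_submatrix, h12]; rfl)
  rw [hsub, det_submatrix_equiv_self e N]
  exact hkey
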